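/- The infinite product \prod_{k=0}^\infty (1/(1 - 4^{-(k+1)}))^{2^k} converges and is at most 3. -/

import Mathlib

open Real

theorem stmt_7 :
    Multipliable (fun k : ℕ => (1 / (1 - (4:ℝ) ^ (-(k + 1 : ℤ)))) ^ (2 ^ k)) ∧
      ∏' k : ℕ, (1 / (1 - (4:ℝ) ^ (-(k + 1 : ℤ)))) ^ (2 ^ k) ≤ 3 := by
  set f : ℕ → ℝ := fun k => (1 / (1 - (4:ℝ) ^ (-(k + 1 : ℤ)))) ^ (2 ^ k) with hf
  have hx : ∀ k : ℕ, (4:ℝ) ^ (-(k + 1 : ℤ)) = ((4:ℝ) ^ (k+1))⁻¹ := by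
    intro k
    rw [zpow_neg]
    norm_cast
  have hxle : ∀ k : ℕ, ((4:ℝ) ^ (k+1))⁻¹ ≤ 1/4 := by
    intro k
    rw [one_div]
    apply inv_anti₀ (by norm_num)
    calc (4:ℝ) = 4 ^ 1 := (pow_one 4).symm
    _ ≤ 4 ^ (k+1) := by
      apply pow_le_pow_right₀ (by norm_num) (by omega)
  have hxpos : ∀ k : ℕ, (0:ℝ) < ((4:ℝ) ^ (k+1))⁻¹ := fun k => by positivity
  have hpos : ∀ k : ℕ, (0:ℝ) < 1 / (1 - (4:ℝ) ^ (-(k + 1 : ℤ))) := by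
    intro k
    rw [hx k]
    have := hxle k
    apply div_pos one_pos
    linarith
  have hone : ∀ k : ℕ, (1:ℝ) ≤ 1 / (1 - (4:ℝ) ^ (-(k + 1 : ℤ))) := by
    intro k
    rw [hx k]
    rw [le_div_iff₀ (by have := hxle k; linarith)]
    have := hxpos k
    linarith
  have hfpos : ∀ k : ℕ, (0:ℝ) < f k := fun k => pow_pos (hpos k) _
  have hlog_nonneg : ∀ k : ℕ, 0 ≤ Real.log (f k) := by
    intro k
    apply Real.log_nonneg
    exact one_le_pow₀ (hone k)
  have hlog_le : ∀ k : ℕ, Real.log (f k) ≤ (1/3) * (1/2)^k := by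
    intro k
    rw [hf, Real.log_pow]
    have h1 : Real.log (1 / (1 - (4:ℝ) ^ (-(k + 1 : ℤ)))) ≤ (1/3) * (1/4)^k := by
      have hlt := hxle k
      have hp := hxpos k
      have := Real.log_le_sub_one_of_pos (hpos k)
      rw [hx k] at this ⊢
      have h2 : 1 / (1 - ((4:ℝ) ^ (k+1))⁻¹) - 1 ≤ (1/3) * (1/4)^k := by
        rw [div_sub' (ne_of_gt (by linarith))]
        rw [div_le_iff₀ (by linarith)]
        have h4 : ((4:ℝ) ^ (k+1))⁻¹ = (1/4) * (1/4)^k := by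
          rw [pow_succ]
          field_simp
          rw [← mul_pow]; norm_num
        rw [h4]
        nlinarith [pow_pos (show (0:ℝ) < 1/4 by norm_num) k,
          pow_le_one₀ (show (0:ℝ) ≤ 1/4 by norm_num) (show (1:ℝ)/4 ≤ 1 by norm_num) (n := k)]
      linarith
    calc (2^k : ℕ) * Real.log (1 / (1 - (4:ℝ) ^ (-(k + 1 : ℤ))))
        ≤ (2:ℝ)^k * ((1/3) * (1/4)^k) := by
          push_cast
          apply mul_le_mul_of_nonneg_left h1 (by positivity)
      _ = (1/3) * (1/2)^k := by
          have h5 : ((1:ℝ)/2)^k * 2^k = 1 := by rw [← mul_pow]; norm_num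
          have h6 : ((1:ℝ)/4)^k = (1/2)^k * (1/2)^k := by rw [← mul_pow]; norm_num
          rw [h6]
          linear_combination ((1/3)*(1/2:ℝ)^k) * h5
  have hsum : Summable (fun k => Real.log (f k)) := by
    apply Summable.of_nonneg_of_le hlog_nonneg hlog_le
    exact (summable_geometric_of_lt_one (by norm_num) (by norm_num)).mul_left _
  have hmul : Multipliable f := by
    exact Real.multipliable_of_summable_log hfpos hsum
  refine ⟨hmul, ?_⟩
  have hprod : HasProd f (∏' k, f k) :=
    (Real.multipliable_of_summable_log hfpos hsum).hasProd
  have heq : ∏' k, f k = Real.exp (∑' k, Real.log (f k)) := by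
    exact (Real.rexp_tsum_eq_tprod hfpos hsum).symm
  rw [heq]
  have htsum : ∑' k, Real.log (f k) ≤ 1 := by
    have h1 : ∑' k, Real.log (f k) ≤ ∑' k : ℕ, (1/3) * (1/2:ℝ)^k := by
      apply Summable.tsum_le_tsum hlog_le hsum
      exact (summable_geometric_of_lt_one (by norm_num) (by norm_num)).mul_left _
    have h2 : ∑' k : ℕ, (1/3) * (1/2:ℝ)^k = 2/3 := by
      rw [tsum_mul_left, tsum_geometric_of_lt_one (by norm_num) (by norm_num)]
      norm_num
    linarith
  calc Real.exp (∑' k, Real.log (f k)) ≤ Real.exp 1 := Real.exp_le_exp.mpr htsum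
    _ ≤ 3 := by linarith [Real.exp_one_lt_d9.le]
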